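/- Let ρ > 0 be a real number, v ∈ ℝ³, and let p be a symmetric negative-definite 3×3 real matrix. Define the symmetric 4×4 matrix ĝ by ĝ₀₀ = ρ, ĝ₀ᵢ = ĝᵢ₀ = ρvⁱ, and ĝᵢⱼ = ρvⁱvʲ + pⁱʲ for i,j ∈ {1,2,3}. Then ĝ, viewed as a quadratic form on ℝ⁴, has signature (1,3), i.e., exactly one positive eigenvalue and three negative eigenvalues. -/

import Mathlib

open Matrix

noncomputable def ghat (ρ : ℝ) (v : Fin 3 → ℝ) (p : Matrix (Fin 3) (Fin 3) ℝ) :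
    Matrix (Fin 4) (Fin 4) ℝ :=
  Matrix.of fun μ ν =>
    Fin.cases (Fin.cases ρ (fun j => ρ * v j) ν)
      (fun i => Fin.cases (ρ * v i) (fun j => ρ * v i * v j + p i j) ν) μ

section aux

variable (ρ : ℝ) (v : Fin 3 → ℝ) (p : Matrix (Fin 3) (Fin 3) ℝ)

lemma ghat_entries : ghat ρ v p = !![ρ, ρ*v 0, ρ*v 1, ρ*v 2;
    ρ*v 0, ρ*v 0*v 0 + p 0 0, ρ*v 0*v 1 + p 0 1, ρ*v 0*v 2 + p 0 2;
    ρ*v 1, ρ*v 1*v 0 + p 1 0, ρ*v 1*v 1 + p 1 1, ρ*v 1*v 2 + p 1 2;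
    ρ*v 2, ρ*v 2*v 0 + p 2 0, ρ*v 2*v 1 + p 2 1, ρ*v 2*v 2 + p 2 2] := by
  ext i j
  fin_cases i <;> fin_cases j <;> rfl

lemma quad_decomp (x : Fin 4 → ℝ) :
    x ⬝ᵥ (ghat ρ v p *ᵥ x) =
      ρ * (x 0 + ∑ j, v j * x j.succ)^2 +
        (fun j => x j.succ) ⬝ᵥ (p *ᵥ fun j => x j.succ) := by
  have h1 : (Fin.succ 0 : Fin 4) = 1 := rfl
  have h2 : (Fin.succ 1 : Fin 4) = 2 := rfl
  have h3 : (Fin.succ 2 : Fin 4) = 3 := rfl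
  simp [ghat_entries, dotProduct, mulVec, Fin.sum_univ_four, Fin.sum_univ_three, h1, h2, h3]
  ring

lemma mulVec_zero_entry (x : Fin 4 → ℝ) :
    (ghat ρ v p *ᵥ x) 0 = ρ * (x 0 + ∑ j, v j * x j.succ) := by
  have h1 : (Fin.succ 0 : Fin 4) = 1 := rfl
  have h2 : (Fin.succ 1 : Fin 4) = 2 := rfl
  have h3 : (Fin.succ 2 : Fin 4) = 3 := rfl
  simp [ghat_entries, dotProduct, mulVec, Fin.sum_univ_four, Fin.sum_univ_three, h1, h2, h3]
  ring

lemma quad_spectral {n : Type*} [Fintype n] [DecidableEq n] {A : Matrix n n ℝ}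
    (h : A.IsHermitian) (x : n → ℝ) :
    x ⬝ᵥ (A *ᵥ x) =
      ∑ i, h.eigenvalues i * (((star (h.eigenvectorUnitary : Matrix n n ℝ)) *ᵥ x) i)^2 := by
  set U : Matrix n n ℝ := (h.eigenvectorUnitary : Matrix n n ℝ) with hU
  have hsym : star U = Uᵀ := by
    rw [Matrix.star_eq_conjTranspose, Matrix.conjTranspose_eq_transpose_of_trivial]
  conv_lhs => rw [h.spectral_theorem, Unitary.conjStarAlgAut_apply]
  rw [← hU, ← Matrix.mulVec_mulVec, ← Matrix.mulVec_mulVec, Matrix.dotProduct_mulVec]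
  have : x ᵥ* U = (star U) *ᵥ x := by rw [hsym, Matrix.mulVec_transpose]
  rw [this]
  simp [dotProduct, Matrix.mulVec_diagonal, Function.comp]
  exact Finset.sum_congr rfl fun i _ => by ring

lemma tail_zero {x : Fin 4 → ℝ} (h0 : x 0 = 0)
    (ht : (fun j => x (Fin.succ j)) = (0 : Fin 3 → ℝ)) : x = 0 :=
  funext fun i => Fin.cases h0 (fun j => congrFun ht j) i

lemma p_neg_quad (hneg : (-p).PosDef) {w : Fin 3 → ℝ} (hw : w ≠ 0) :
    w ⬝ᵥ (p *ᵥ w) < 0 := by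
  have := hneg.dotProduct_mulVec_pos hw
  simp only [star_trivial, Matrix.neg_mulVec, dotProduct_neg] at this
  linarith

end aux

/-- the densitized metric built from `ρ > 0`, `v`, and a symmetric
negative-definite pressure tensor `p` has signature (1,3): exactly one positive
and three negative eigenvalues. -/
theorem ghat_signature (ρ : ℝ) (hρ : 0 < ρ) (v : Fin 3 → ℝ)
    (p : Matrix (Fin 3) (Fin 3) ℝ) (hp : p.IsSymm) (hneg : (-p).PosDef)
    (h : (ghat ρ v p).IsHermitian) :
    (Finset.univ.filter fun i => 0 < h.eigenvalues i).card = 1 ∧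
    (Finset.univ.filter fun i => h.eigenvalues i < 0).card = 3 := by
  classical
  set A : Matrix (Fin 4) (Fin 4) ℝ := ghat ρ v p with hA
  set U : Matrix (Fin 4) (Fin 4) ℝ := (h.eigenvectorUnitary : Matrix (Fin 4) (Fin 4) ℝ) with hUdef
  set lam : Fin 4 → ℝ := h.eigenvalues with hlam
  -- the linear functional x ↦ x 0 + ∑ v j * x (j+1)
  let ℓ : (Fin 4 → ℝ) →ₗ[ℝ] ℝ :=
    LinearMap.proj 0 + ∑ j : Fin 3, v j • LinearMap.proj (Fin.succ j)
  have hℓ : ∀ x : Fin 4 → ℝ, ℓ x = x 0 + ∑ j, v j * x j.succ := by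
    intro x
    simp [ℓ, LinearMap.sum_apply]
  -- kernel of A is trivial
  have hker : ∀ x : Fin 4 → ℝ, A *ᵥ x = 0 → x = 0 := by
    intro x hx
    have h0 : (A *ᵥ x) 0 = 0 := by rw [hx]; rfl
    rw [hA, mulVec_zero_entry] at h0
    have hL : x 0 + ∑ j, v j * x j.succ = 0 := by
      rcases mul_eq_zero.1 h0 with hh | hh
      · exact absurd hh (ne_of_gt hρ)
      · exact hh
    have hQ : x ⬝ᵥ (A *ᵥ x) = 0 := by rw [hx]; simp
    rw [hA, quad_decomp, hL] at hQ
    simp only [mul_zero, zero_pow, ne_eq, OfNat.ofNat_ne_zero, not_false_eq_true, zero_add] at hQ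
    by_cases hw : (fun j => x (Fin.succ j)) = (0 : Fin 3 → ℝ)
    · refine tail_zero ?_ hw
      have : (∑ j, v j * x j.succ) = 0 := by
        refine Finset.sum_eq_zero fun j _ => ?_
        rw [congrFun hw j]; simp
      linarith [hL, this]
    · exact absurd hQ (ne_of_lt (p_neg_quad p hneg hw))
  -- eigenvalues are nonzero
  have hnz : ∀ i, lam i ≠ 0 := by
    intro i hi
    have hmv := h.mulVec_eigenvectorBasis i
    rw [← hlam, hi, zero_smul] at hmv
    have hz : ⇑(h.eigenvectorBasis i) = (0 : Fin 4 → ℝ) := hker _ hmv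
    have : h.eigenvectorBasis i ≠ 0 := h.eigenvectorBasis.orthonormal.ne_zero i
    exact this (by ext j; exact congrFun hz j)
  -- partition of the four eigenvalues
  have hpart : (Finset.univ.filter fun i => 0 < lam i).card +
      (Finset.univ.filter fun i => lam i < 0).card = 4 := by
    have hc : (Finset.univ.filter fun i => lam i < 0) =
        (Finset.univ.filter fun i => ¬ 0 < lam i) := by
      apply Finset.filter_congr
      intro i _
      constructor
      · intro hlt; exact not_lt.2 (le_of_lt hlt)
      · intro hnlt
        rcases lt_trichotomy (lam i) 0 with hh | hh | hh
        · exact hh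
        · exact absurd hh (hnz i)
        · exact absurd hh hnlt
    rw [hc, Finset.card_filter_add_card_filter_not]
    simp
  -- at least one positive eigenvalue
  have hpos1 : 1 ≤ (Finset.univ.filter fun i => 0 < lam i).card := by
    by_contra hcon
    push_neg at hcon
    interval_cases hcard : (Finset.univ.filter fun i => 0 < lam i).card
    have hall : ∀ i, lam i ≤ 0 := by
      intro i
      by_contra hi
      push_neg at hi
      have : i ∈ Finset.univ.filter fun i => 0 < lam i := by simp [hi]
      have := Finset.card_pos.2 ⟨i, this⟩
      omega
    set e₀ : Fin 4 → ℝ := fun i => if i = 0 then 1 else 0 with he₀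
    have hq1 : e₀ ⬝ᵥ (A *ᵥ e₀) = ρ := by
      rw [hA, quad_decomp]
      have h0 : e₀ 0 = 1 := by simp [he₀]
      have hs : ∀ j : Fin 3, e₀ j.succ = 0 := fun j => by
        simp [he₀, Fin.succ_ne_zero]
      simp [h0, hs, dotProduct]
    have hq2 : e₀ ⬝ᵥ (A *ᵥ e₀) ≤ 0 := by
      rw [quad_spectral h]
      refine Finset.sum_nonpos fun i _ => ?_
      have := hall i
      nlinarith [sq_nonneg (((star U) *ᵥ e₀) i)]
    rw [hq1] at hq2
    linarith
  -- at least three negative eigenvalues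
  have hneg3 : 3 ≤ (Finset.univ.filter fun i => lam i < 0).card := by
    by_contra hcon
    push_neg at hcon
    have hNle : (Finset.univ.filter fun i => lam i < 0).card ≤ 2 := by omega
    set N : Finset (Fin 4) := Finset.univ.filter fun i => lam i < 0 with hN
    -- the linear map recording the "negative" coordinates in the eigenbasis
    let F : (Fin 4 → ℝ) →ₗ[ℝ] ({ i // i ∈ N } → ℝ) :=
      LinearMap.pi fun i => (LinearMap.proj (i : Fin 4)).comp (Matrix.mulVecLin (star U))
    set W : Submodule ℝ (Fin 4 → ℝ) := LinearMap.ker ℓ with hW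
    set V : Submodule ℝ (Fin 4 → ℝ) := LinearMap.ker F with hV
    have hfr4 : Module.finrank ℝ (Fin 4 → ℝ) = 4 := by
      simp [Module.finrank_pi]
    have hWfr : 3 ≤ Module.finrank ℝ W := by
      rw [hW]
      have h1 := LinearMap.finrank_range_add_finrank_ker ℓ
      have h2 : Module.finrank ℝ (LinearMap.range ℓ) ≤ 1 := by
        have := Submodule.finrank_le (LinearMap.range ℓ)
        simpa using this
      rw [hfr4] at h1
      omega
    have hVfr : 2 ≤ Module.finrank ℝ V := by
      rw [hV]
      have h1 := LinearMap.finrank_range_add_finrank_ker F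
      have h2 : Module.finrank ℝ (LinearMap.range F) ≤ 2 := by
        have h3 := Submodule.finrank_le (LinearMap.range F)
        have h4 : Module.finrank ℝ ({ i // i ∈ N } → ℝ) = N.card := by
          simp [Module.finrank_pi, Fintype.card_coe]
        omega
      rw [hfr4] at h1
      omega
    have hint : 1 ≤ Module.finrank ℝ (W ⊓ V : Submodule ℝ (Fin 4 → ℝ)) := by
      have hsum := Submodule.finrank_sup_add_finrank_inf_eq W V
      have hsup : Module.finrank ℝ (W ⊔ V : Submodule ℝ (Fin 4 → ℝ)) ≤ 4 := by
        have := Submodule.finrank_le (W ⊔ V)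
        rw [hfr4] at this
        exact this
      omega
    have hne : (W ⊓ V : Submodule ℝ (Fin 4 → ℝ)) ≠ ⊥ := by
      intro hbot
      rw [hbot] at hint
      simp at hint
    obtain ⟨x, hxmem, hx0⟩ := Submodule.exists_mem_ne_zero_of_ne_bot hne
    have hxW : x ∈ W := hxmem.1
    have hxV : x ∈ V := hxmem.2
    -- x is in the kernel of ℓ: the quadratic form is negative on it
    have hℓx : x 0 + ∑ j, v j * x j.succ = 0 := by
      have := hxW
      rw [hW, LinearMap.mem_ker] at this
      rw [← hℓ x, this]
    have hwne : (fun j => x (Fin.succ j)) ≠ (0 : Fin 3 → ℝ) := by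
      intro hw
      apply hx0
      refine tail_zero ?_ hw
      have : (∑ j, v j * x j.succ) = 0 := by
        refine Finset.sum_eq_zero fun j _ => ?_
        rw [congrFun hw j]; simp
      linarith [hℓx, this]
    have hQneg : x ⬝ᵥ (A *ᵥ x) < 0 := by
      rw [hA, quad_decomp, hℓx]
      have := p_neg_quad p hneg hwne
      simp only [mul_zero, zero_pow, ne_eq, OfNat.ofNat_ne_zero, not_false_eq_true, zero_add]
      linarith
    -- x is in V: the quadratic form is nonnegative on it
    have hQnn : 0 ≤ x ⬝ᵥ (A *ᵥ x) := by
      rw [quad_spectral h]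
      refine Finset.sum_nonneg fun i _ => ?_
      by_cases hi : lam i < 0
      · have hiN : i ∈ N := by simp [hN, hi]
        have hFx : F x = 0 := by rwa [hV, LinearMap.mem_ker] at hxV
        have : ((star U) *ᵥ x) i = 0 := by
          have := congrFun hFx ⟨i, hiN⟩
          simpa [F] using this
        rw [this]
        simp
      · push_neg at hi
        have := sq_nonneg (((star U) *ᵥ x) i)
        positivity
    linarith
  constructor <;> omega
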